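/- Let p > q > 0 be reals, n ≥ 2, and A as above. If S ∈ B'_n is a signed permutation matrix such that A^{-1} S A has integer entries, then S satisfies: s_{i,j} = s_{i+1,j+1} for i,j < n; s_{i,n} = −s_{i+1,1} and s_{n,j} = −s_{1,j+1} for i,j < n; and s_{n,n} = s_{1,1}. -/

import Mathlib

/-- The matrix `A` with `q` on the diagonal, `-p` on the subdiagonal,
`p` in the top-right corner (entry `(1,n)`), and `0` elsewhere. -/
def tilingMatrix (p q : ℝ) (n : ℕ) : Matrix (Fin n) (Fin n) ℝ :=
  Matrix.of fun i j =>
    if (i : ℕ) = (j : ℕ) then q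
    else if (i : ℕ) = (j : ℕ) + 1 then -p
    else if (i : ℕ) = 0 ∧ (j : ℕ) = n - 1 then p
    else 0

/-- A signed permutation matrix: all entries in `{0, ±1}`, with exactly one
nonzero entry in each row and each column. -/
def IsSignedPerm {n : ℕ} (S : Matrix (Fin n) (Fin n) ℝ) : Prop :=
  (∀ i j, S i j = 0 ∨ S i j = 1 ∨ S i j = -1) ∧
    (∀ i, ∃! j, S i j ≠ 0) ∧ (∀ j, ∃! i, S i j ≠ 0)

def fsucc {n : ℕ} (hn : 0 < n) (j : Fin n) : Fin n :=
  ⟨if (j : ℕ) + 1 = n then 0 else (j : ℕ) + 1, by have := j.isLt; split <;> omega⟩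
def fpred {n : ℕ} (hn : 0 < n) (i : Fin n) : Fin n :=
  ⟨if (i : ℕ) = 0 then n - 1 else (i : ℕ) - 1, by have := i.isLt; split <;> omega⟩

lemma fsucc_val {n : ℕ} (hn : 0 < n) (j : Fin n) :
    ((j : ℕ) + 1 = n ∧ ((fsucc hn j : Fin n) : ℕ) = 0) ∨
      ((j : ℕ) + 1 ≠ n ∧ ((fsucc hn j : Fin n) : ℕ) = (j : ℕ) + 1) := by
  by_cases h : (j : ℕ) + 1 = n
  · exact Or.inl ⟨h, by simp [fsucc, h]⟩
  · exact Or.inr ⟨h, by simp [fsucc, h]⟩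

lemma fpred_val {n : ℕ} (hn : 0 < n) (i : Fin n) :
    ((i : ℕ) = 0 ∧ ((fpred hn i : Fin n) : ℕ) = n - 1) ∨
      ((i : ℕ) ≠ 0 ∧ ((fpred hn i : Fin n) : ℕ) = (i : ℕ) - 1) := by
  by_cases h : (i : ℕ) = 0
  · exact Or.inl ⟨h, by simp [fpred, h]⟩
  · exact Or.inr ⟨h, by simp [fpred, h]⟩

noncomputable def ui {n : ℕ} (i : Fin n) : ℝ := if (i : ℕ) = 0 then -1 else 1
noncomputable def wj {n : ℕ} (j : Fin n) : ℝ := if (j : ℕ) = n - 1 then -1 else 1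

lemma rowA (p q : ℝ) {n : ℕ} (hn : 2 ≤ n) (M : Matrix (Fin n) (Fin n) ℝ) (i j : Fin n) :
    (tilingMatrix p q n * M) i j
      = q * M i j - p * ui i * M (fpred (Nat.lt_of_lt_of_le Nat.two_pos hn) i) j := by
  have h0 : 0 < n := by omega
  rw [Matrix.mul_apply]
  have hfp := fpred_val h0 i
  have hi := i.isLt
  have hne : fpred h0 i ≠ i := by
    rw [Ne, Fin.ext_iff]
    omega
  have key : ∀ b : Fin n, tilingMatrix p q n i b * M b j
      = (if b = i then q * M b j else 0)
        + (if b = fpred h0 i then (-(p * ui i)) * M b j else 0) := by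
    intro b
    simp only [tilingMatrix, Matrix.of_apply, ui, Fin.ext_iff]
    have hb := b.isLt
    by_cases h1 : (b : ℕ) = (i : ℕ)
    · rw [if_pos h1.symm, if_pos h1, if_neg (by omega)]
      ring
    · rw [if_neg (fun h => h1 h.symm), if_neg h1]
      by_cases h2 : (b : ℕ) = ((fpred h0 i : Fin n) : ℕ)
      · rw [if_pos h2]
        by_cases h3 : (i : ℕ) = 0
        · rw [if_neg (by omega), if_pos (by constructor <;> omega), if_pos h3]
          ring
        · rw [if_pos (by omega), if_neg h3]
          ring
      · rw [if_neg h2, if_neg (by omega), if_neg (by omega)]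
        ring
  rw [Finset.sum_congr rfl (fun b _ => key b), Finset.sum_add_distrib]
  simp [Finset.sum_ite_eq']
  ring

lemma colA (p q : ℝ) {n : ℕ} (hn : 2 ≤ n) (M : Matrix (Fin n) (Fin n) ℝ) (i j : Fin n) :
    (M * tilingMatrix p q n) i j
      = q * M i j - p * wj j * M i (fsucc (Nat.lt_of_lt_of_le Nat.two_pos hn) j) := by
  have h0 : 0 < n := by omega
  rw [Matrix.mul_apply]
  have hfs := fsucc_val h0 j
  have hj := j.isLt
  have hne : fsucc h0 j ≠ j := by
    rw [Ne, Fin.ext_iff]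
    omega
  have key : ∀ b : Fin n, M i b * tilingMatrix p q n b j
      = (if b = j then M i b * q else 0)
        + (if b = fsucc h0 j then M i b * (-(p * wj j)) else 0) := by
    intro b
    simp only [tilingMatrix, Matrix.of_apply, wj, Fin.ext_iff]
    have hb := b.isLt
    by_cases h1 : (b : ℕ) = (j : ℕ)
    · rw [if_pos h1, if_pos h1, if_neg (by omega)]
      ring
    · rw [if_neg h1, if_neg h1]
      by_cases h2 : (b : ℕ) = ((fsucc h0 j : Fin n) : ℕ)
      · rw [if_pos h2]
        by_cases h3 : (j : ℕ) = n - 1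
        · rw [if_neg (by omega), if_pos (by constructor <;> omega), if_pos h3]
          ring
        · rw [if_pos (by omega), if_neg h3]
          ring
      · rw [if_neg h2, if_neg (by omega), if_neg (by omega)]
        ring
  rw [Finset.sum_congr rfl (fun b _ => key b), Finset.sum_add_distrib]
  simp [Finset.sum_ite_eq']
  ring

noncomputable def Bmat (p q : ℝ) (n : ℕ) : Matrix (Fin n) (Fin n) ℝ :=
  Matrix.of fun i j =>
    if (j : ℕ) ≤ (i : ℕ) then q ^ (n - 1 - ((i : ℕ) - (j : ℕ))) * p ^ ((i : ℕ) - (j : ℕ))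
    else -(q ^ ((j : ℕ) - (i : ℕ) - 1) * p ^ (n - ((j : ℕ) - (i : ℕ))))

lemma fin1 (p q : ℝ) {n a b c d : ℕ} (hb : b = 0) (ha : a + 1 = n) (hc : c = 0)
    (hd : d + 1 = n) : q * (q ^ a * p ^ b) - p * -1 * (q ^ c * p ^ d)
      = (p ^ n + q ^ n) * 1 := by
  have had : a = d := by omega
  subst had hb hc; rw [← ha, pow_succ, pow_succ]; ring

lemma fin2 (p q : ℝ) {n a b c d : ℕ} (h1 : a + 1 = c) (h2 : b = d + 1) :
    q * (-(q ^ a * p ^ b)) - p * -1 * (q ^ c * p ^ d) = (p ^ n + q ^ n) * 0 := by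
  subst h2; rw [← h1, pow_succ, pow_succ]; ring

lemma fin3 (p q : ℝ) {n a b c d : ℕ} (hb : b = 0) (ha : a + 1 = n) (hc : c = 0)
    (hd : d + 1 = n) : q * (q ^ a * p ^ b) - p * 1 * (-(q ^ c * p ^ d))
      = (p ^ n + q ^ n) * 1 := by
  have had : a = d := by omega
  subst had hb hc; rw [← ha, pow_succ, pow_succ]; ring

lemma fin4 (p q : ℝ) {n a b c d : ℕ} (h1 : a + 1 = c) (h2 : b = d + 1) :
    q * (q ^ a * p ^ b) - p * 1 * (q ^ c * p ^ d) = (p ^ n + q ^ n) * 0 := by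
  subst h2; rw [← h1, pow_succ, pow_succ]; ring

lemma fin5 (p q : ℝ) {n a b c d : ℕ} (h1 : a + 1 = c) (h2 : b = d + 1) :
    q * (-(q ^ a * p ^ b)) - p * 1 * (-(q ^ c * p ^ d)) = (p ^ n + q ^ n) * 0 := by
  subst h2; rw [← h1, pow_succ, pow_succ]; ring

lemma AB (p q : ℝ) {n : ℕ} (hn : 2 ≤ n) :
    tilingMatrix p q n * Bmat p q n = (p ^ n + q ^ n) • (1 : Matrix (Fin n) (Fin n) ℝ) := by
  have h0 : 0 < n := by omega
  ext i j
  rw [rowA p q hn]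
  have hfp := fpred_val h0 i
  have hi := i.isLt
  have hj := j.isLt
  simp only [Bmat, Matrix.of_apply, Matrix.smul_apply, Matrix.one_apply, ui, smul_eq_mul]
  by_cases h3 : (i : ℕ) = 0
  · rw [if_pos h3]
    have hfp' : ((fpred h0 i : Fin n) : ℕ) = n - 1 := by omega
    rw [hfp']
    by_cases h4 : (j : ℕ) = 0
    · rw [if_pos (by omega), if_pos (by omega), if_pos (Fin.ext (by omega))]
      exact fin1 p q (by omega) (by omega) (by omega) (by omega)
    · rw [if_neg (by omega), if_pos (by omega), if_neg (fun h => by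
        have := Fin.val_eq_of_eq h; omega)]
      exact fin2 p q (by omega) (by omega)
  · rw [if_neg h3]
    have hfp' : ((fpred h0 i : Fin n) : ℕ) = (i : ℕ) - 1 := by omega
    rw [hfp']
    rcases lt_trichotomy ((j : ℕ)) ((i : ℕ)) with h4 | h4 | h4
    · rw [if_pos (by omega), if_pos (by omega), if_neg (fun h => by
        have := Fin.val_eq_of_eq h; omega)]
      exact fin4 p q (by omega) (by omega)
    · rw [if_pos (by omega), if_neg (by omega), if_pos (Fin.ext (by omega))]
      exact fin3 p q (by omega) (by omega) (by omega) (by omega)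
    · rw [if_neg (by omega), if_neg (by omega), if_neg (fun h => by
        have := Fin.val_eq_of_eq h; omega)]
      exact fin5 p q (by omega) (by omega)

lemma tri_case {p q a b c d : ℝ} (hq : 0 < q) (hqp : q < p) (hp2 : p ≠ 2*q)
    (ha : a = 0 ∨ a = 1 ∨ a = -1) (hb : b = 0 ∨ b = 1 ∨ b = -1)
    (hc : c = 0 ∨ c = 1 ∨ c = -1) (hd : d = 0 ∨ d = 1 ∨ d = -1)
    (h : q * a - p * c = q * b - p * d) : a = b ∧ c = d := by
  rcases ha with rfl|rfl|rfl <;> rcases hb with rfl|rfl|rfl <;>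
    rcases hc with rfl|rfl|rfl <;> rcases hd with rfl|rfl|rfl <;>
    refine ⟨?_, ?_⟩ <;>
    first
      | rfl
      | linarith
      | exact absurd (by linarith : p = 2*q) hp2

lemma tri_parity {q a b c d : ℝ} (hq : 0 < q)
    (ha : a = 0 ∨ a = 1 ∨ a = -1) (hb : b = 0 ∨ b = 1 ∨ b = -1)
    (hc : c = 0 ∨ c = 1 ∨ c = -1) (hd : d = 0 ∨ d = 1 ∨ d = -1)
    (h : q * a - 2*q * c = q * b - 2*q * d) : a = 0 ↔ b = 0 := by
  rcases ha with rfl|rfl|rfl <;> rcases hb with rfl|rfl|rfl <;>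
    rcases hc with rfl|rfl|rfl <;> rcases hd with rfl|rfl|rfl <;>
    norm_num <;> linarith

lemma sgn_mul_tri {w s : ℝ} (hw : w = 1 ∨ w = -1) (hs : s = 0 ∨ s = 1 ∨ s = -1) :
    w * s = 0 ∨ w * s = 1 ∨ w * s = -1 := by
  rcases hw with rfl|rfl <;> rcases hs with rfl|rfl|rfl <;> norm_num

lemma val_mk {n : ℕ} {a : ℕ} (h : a < n) : ((⟨a, h⟩ : Fin n) : ℕ) = a := rfl

theorem stabilizer_is_cyclic_form (p q : ℝ) (hq : 0 < q) (hqp : q < p)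
    (n : ℕ) (hn : 2 ≤ n) (S : Matrix (Fin n) (Fin n) ℝ) (hS : IsSignedPerm S)
    (hint : ∀ i j, ∃ m : ℤ, ((tilingMatrix p q n)⁻¹ * S * tilingMatrix p q n) i j = (m : ℝ)) :
    (∀ i j : Fin n, ∀ hi : (i : ℕ) + 1 < n, ∀ hj : (j : ℕ) + 1 < n,
        S i j = S ⟨(i : ℕ) + 1, hi⟩ ⟨(j : ℕ) + 1, hj⟩) ∧
      (∀ i : Fin n, ∀ hi : (i : ℕ) + 1 < n,
        S i ⟨n - 1, by omega⟩ = -S ⟨(i : ℕ) + 1, hi⟩ ⟨0, by omega⟩) ∧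
      (∀ j : Fin n, ∀ hj : (j : ℕ) + 1 < n,
        S ⟨n - 1, by omega⟩ j = -S ⟨0, by omega⟩ ⟨(j : ℕ) + 1, hj⟩) ∧
      S ⟨n - 1, by omega⟩ ⟨n - 1, by omega⟩ = S ⟨0, by omega⟩ ⟨0, by omega⟩ := by
  have h0 : 0 < n := by omega
  have hp : 0 < p := lt_trans hq hqp
  set A := tilingMatrix p q n with hA
  set B := Bmat p q n with hB
  set c : ℝ := p ^ n + q ^ n with hc
  have hcpos : 0 < c := by positivity
  have hAB : A * B = c • (1 : Matrix (Fin n) (Fin n) ℝ) := AB p q hn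
  have hAB1 : A * (c⁻¹ • B) = 1 := by
    rw [Matrix.mul_smul, hAB, smul_smul, inv_mul_cancel₀ hcpos.ne', one_smul]
  have hAinv : A⁻¹ = c⁻¹ • B := Matrix.inv_eq_right_inv hAB1
  set M := A⁻¹ * S * A with hM
  have hSA : S * A = A * M := by
    have h2 : A * A⁻¹ = 1 := by rw [hAinv]; exact hAB1
    calc S * A = 1 * (S * A) := (Matrix.one_mul _).symm
      _ = A * A⁻¹ * (S * A) := by rw [h2]
      _ = A * M := by
          rw [hM, Matrix.mul_assoc A A⁻¹ (S * A), ← Matrix.mul_assoc A⁻¹ S A]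
  -- entry bound on M
  have hBabs : ∀ i b : Fin n, |B i b| ≤ p ^ (n - 1) := by
    intro i b
    have hi := i.isLt
    have hb := b.isLt
    simp only [hB, Bmat, Matrix.of_apply]
    split_ifs with h
    · rw [abs_of_nonneg (by positivity)]
      calc q ^ (n - 1 - ((i : ℕ) - (b : ℕ))) * p ^ ((i : ℕ) - (b : ℕ))
          ≤ p ^ (n - 1 - ((i : ℕ) - (b : ℕ))) * p ^ ((i : ℕ) - (b : ℕ)) :=
            mul_le_mul_of_nonneg_right (pow_le_pow_left₀ hq.le hqp.le _) (by positivity)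
        _ = p ^ (n - 1) := by rw [← pow_add]; congr 1; omega
    · rw [abs_neg, abs_of_nonneg (by positivity)]
      calc q ^ ((b : ℕ) - (i : ℕ) - 1) * p ^ (n - ((b : ℕ) - (i : ℕ)))
          ≤ p ^ ((b : ℕ) - (i : ℕ) - 1) * p ^ (n - ((b : ℕ) - (i : ℕ))) :=
            mul_le_mul_of_nonneg_right (pow_le_pow_left₀ hq.le hqp.le _) (by positivity)
        _ = p ^ (n - 1) := by rw [← pow_add]; congr 1; omega
  have hBS : ∀ i b : Fin n, |(B * S) i b| ≤ p ^ (n - 1) := by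
    intro i b
    obtain ⟨r, hr, hru⟩ := hS.2.2 b
    rw [Matrix.mul_apply, Finset.sum_eq_single_of_mem r (Finset.mem_univ r)
      (fun x _ hx => by
        have hz : S x b = 0 := by
          by_contra hnz
          exact hx (hru x hnz)
        rw [hz, mul_zero])]
    rcases hS.1 r b with h | h | h
    · exact absurd h hr
    · rw [h, mul_one]; exact hBabs i r
    · rw [h]; rw [mul_neg, mul_one, abs_neg]; exact hBabs i r
  have hwj : ∀ j : Fin n, |wj j| = 1 := by
    intro j; simp only [wj]; split_ifs <;> norm_num
  have hMentry : ∀ i j, M i j = c⁻¹ * ((B * S * A) i j) := by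
    intro i j
    rw [hM, hAinv, Matrix.smul_mul, Matrix.smul_mul, Matrix.smul_apply, smul_eq_mul]
  have hpn : p ^ (n - 1) * p = p ^ n := by rw [← pow_succ]; congr 1; omega
  have hMlt2 : ∀ i j, |M i j| < 2 := by
    intro i j
    rw [hMentry i j, abs_mul, abs_of_pos (inv_pos.2 hcpos)]
    have hZ : |(B * S * A) i j| ≤ q * p ^ (n - 1) + p * p ^ (n - 1) := by
      rw [colA p q hn]
      calc |q * (B * S) i j - p * wj j * (B * S) i (fsucc (by omega) j)|
          ≤ |q * (B * S) i j| + |p * wj j * (B * S) i (fsucc (by omega) j)| :=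
            abs_sub _ _
        _ ≤ q * p ^ (n - 1) + p * p ^ (n - 1) := by
            apply add_le_add
            · rw [abs_mul, abs_of_pos hq]
              exact mul_le_mul_of_nonneg_left (hBS _ _) hq.le
            · rw [abs_mul, abs_mul, abs_of_pos hp, hwj, mul_one]
              exact mul_le_mul_of_nonneg_left (hBS _ _) hp.le
    have h2c : q * p ^ (n - 1) + p * p ^ (n - 1) < 2 * c := by
      have h1 : q * p ^ (n - 1) < p * p ^ (n - 1) :=
        mul_lt_mul_of_pos_right hqp (by positivity)
      have h2 : (0:ℝ) < q ^ n := by positivity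
      rw [hc]
      nlinarith [hpn]
    calc c⁻¹ * |(B * S * A) i j| ≤ c⁻¹ * (q * p ^ (n - 1) + p * p ^ (n - 1)) :=
          mul_le_mul_of_nonneg_left hZ (inv_pos.2 hcpos).le
      _ < c⁻¹ * (2 * c) := mul_lt_mul_of_pos_left h2c (inv_pos.2 hcpos)
      _ = 2 := by field_simp
  have hMtri : ∀ i j, M i j = 0 ∨ M i j = 1 ∨ M i j = -1 := by
    intro i j
    obtain ⟨m, hm⟩ := hint i j
    have hm' : M i j = (m : ℝ) := hm
    have h2 : |(m : ℝ)| < 2 := hm' ▸ hMlt2 i j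
    have h3 : |m| < 2 := by exact_mod_cast (by rwa [← Int.cast_abs] at h2 : ((|m| : ℤ) : ℝ) < 2)
    have h4 := abs_lt.mp h3
    have : m = 0 ∨ m = 1 ∨ m = -1 := by omega
    rcases this with rfl | rfl | rfl <;> simp [hm']
  -- the fundamental entrywise equation
  have hE : ∀ i j, q * S i j - p * (wj j * S i (fsucc h0 j))
      = q * M i j - p * (ui i * M (fpred h0 i) j) := by
    intro i j
    have h : (S * A) i j = (A * M) i j := by rw [hSA]
    rw [colA p q hn, rowA p q hn] at h
    linear_combination h
  have hui : ∀ i : Fin n, ui i = 1 ∨ ui i = -1 := by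
    intro i; simp only [ui]; split_ifs <;> simp
  have hwj' : ∀ j : Fin n, wj j = 1 ∨ wj j = -1 := by
    intro j; simp only [wj]; split_ifs <;> simp
  have hStri := hS.1
  -- row and column uniqueness
  have hrowu : ∀ i j j' : Fin n, S i j ≠ 0 → j' ≠ j → S i j' = 0 := by
    intro i j j' hj hne
    obtain ⟨j0, _, hu⟩ := hS.2.1 i
    by_contra hnz
    exact hne ((hu j' hnz).trans (hu j hj).symm)
  have hcolu : ∀ i j i' : Fin n, S i j ≠ 0 → i' ≠ i → S i' j = 0 := by
    intro i j i' hi hne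
    obtain ⟨i0, _, hu⟩ := hS.2.2 j
    by_contra hnz
    exact hne ((hu i' hnz).trans (hu i hi).symm)
  have hfsne : ∀ j : Fin n, fsucc h0 j ≠ j := by
    intro j
    have := fsucc_val h0 j
    have hj := j.isLt
    rw [Ne, Fin.ext_iff]
    omega
  have hfpne : ∀ i : Fin n, fpred h0 i ≠ i := by
    intro i
    have := fpred_val h0 i
    have hi := i.isLt
    rw [Ne, Fin.ext_iff]
    omega
  -- main claim:
  have hxy : ∀ i j, S i j = M i j ∧
      wj j * S i (fsucc h0 j) = ui i * M (fpred h0 i) j := by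
    by_cases hp2 : p = 2 * q
    · -- special case p = 2q
      have parity : ∀ i j, (S i j = 0 ↔ M i j = 0) := by
        intro i j
        have h := hE i j
        rw [hp2] at h
        exact tri_parity hq (hStri i j) (hMtri i j)
          (sgn_mul_tri (hwj' j) (hStri i _)) (sgn_mul_tri (hui i) (hMtri _ j)) h
      intro i j
      by_cases hs : S i j = 0
      · have hm : M i j = 0 := (parity i j).1 hs
        have h := hE i j
        rw [hs, hm] at h
        have h' : p * (wj j * S i (fsucc h0 j)) = p * (ui i * M (fpred h0 i) j) := by
          linarith
        exact ⟨hs.trans hm.symm, mul_left_cancel₀ hp.ne' h'⟩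
      · have h1 : S i (fsucc h0 j) = 0 := hrowu i j _ hs (hfsne j)
        have h2 : S (fpred h0 i) j = 0 := hcolu i j _ hs (hfpne i)
        have hm2 : M (fpred h0 i) j = 0 := (parity _ _).1 h2
        have h := hE i j
        rw [h1, hm2] at h
        constructor
        · have h' : q * S i j = q * M i j := by linarith
          exact mul_left_cancel₀ hq.ne' h'
        · rw [h1, hm2, mul_zero, mul_zero]
    · intro i j
      exact tri_case hq hqp hp2 (hStri i j) (hMtri i j)
        (sgn_mul_tri (hwj' j) (hStri i _)) (sgn_mul_tri (hui i) (hMtri _ j)) (hE i j)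
  have key : ∀ i j, wj j * S i (fsucc h0 j) = ui i * S (fpred h0 i) j := by
    intro i j
    rw [(hxy i j).2, (hxy (fpred h0 i) j).1]
  refine ⟨?_, ?_, ?_, ?_⟩
  · intro i j hi hj
    have hk := key ⟨(i : ℕ) + 1, hi⟩ j
    have hw : wj j = 1 := by simp only [wj]; rw [if_neg (by omega)]
    have hu : ui (⟨(i : ℕ) + 1, hi⟩ : Fin n) = 1 := by
      simp only [ui, val_mk]; rw [if_neg (by omega)]
    have hfs : fsucc h0 j = ⟨(j : ℕ) + 1, hj⟩ := by
      have h := fsucc_val h0 j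
      apply Fin.ext
      simp only [val_mk] at h ⊢
      omega
    have hfp : fpred h0 (⟨(i : ℕ) + 1, hi⟩ : Fin n) = i := by
      have h := fpred_val h0 (⟨(i : ℕ) + 1, hi⟩ : Fin n)
      apply Fin.ext
      simp only [val_mk] at h ⊢
      omega
    rw [hw, hu, hfs, hfp, one_mul, one_mul] at hk
    exact hk.symm
  · intro i hi
    have hk := key ⟨(i : ℕ) + 1, hi⟩ ⟨n - 1, by omega⟩
    have hw : wj (⟨n - 1, by omega⟩ : Fin n) = -1 := by
      simp [wj, val_mk]
    have hu : ui (⟨(i : ℕ) + 1, hi⟩ : Fin n) = 1 := by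
      simp only [ui, val_mk]; rw [if_neg (by omega)]
    have hfs : fsucc h0 (⟨n - 1, by omega⟩ : Fin n) = ⟨0, by omega⟩ := by
      have h := fsucc_val h0 (⟨n - 1, by omega⟩ : Fin n)
      apply Fin.ext
      simp only [val_mk] at h ⊢
      omega
    have hfp : fpred h0 (⟨(i : ℕ) + 1, hi⟩ : Fin n) = i := by
      have h := fpred_val h0 (⟨(i : ℕ) + 1, hi⟩ : Fin n)
      apply Fin.ext
      simp only [val_mk] at h ⊢
      omega
    rw [hw, hu, hfs, hfp, one_mul] at hk
    linarith
  · intro j hj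
    have hk := key ⟨0, by omega⟩ j
    have hw : wj j = 1 := by simp only [wj]; rw [if_neg (by omega)]
    have hu : ui (⟨0, by omega⟩ : Fin n) = -1 := by
      simp [ui, val_mk]
    have hfs : fsucc h0 j = ⟨(j : ℕ) + 1, hj⟩ := by
      have h := fsucc_val h0 j
      apply Fin.ext
      simp only [val_mk] at h ⊢
      omega
    have hfp : fpred h0 (⟨0, by omega⟩ : Fin n) = ⟨n - 1, by omega⟩ := by
      have h := fpred_val h0 (⟨0, by omega⟩ : Fin n)
      apply Fin.ext
      simp only [val_mk] at h ⊢
      omega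
    rw [hw, hu, hfs, hfp, one_mul] at hk
    linarith
  · have hk := key ⟨0, by omega⟩ ⟨n - 1, by omega⟩
    have hw : wj (⟨n - 1, by omega⟩ : Fin n) = -1 := by
      simp [wj, val_mk]
    have hu : ui (⟨0, by omega⟩ : Fin n) = -1 := by
      simp [ui, val_mk]
    have hfs : fsucc h0 (⟨n - 1, by omega⟩ : Fin n) = ⟨0, by omega⟩ := by
      have h := fsucc_val h0 (⟨n - 1, by omega⟩ : Fin n)
      apply Fin.ext
      simp only [val_mk] at h ⊢
      omega
    have hfp : fpred h0 (⟨0, by omega⟩ : Fin n) = ⟨n - 1, by omega⟩ := by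
      have h := fpred_val h0 (⟨0, by omega⟩ : Fin n)
      apply Fin.ext
      simp only [val_mk] at h ⊢
      omega
    rw [hw, hu, hfs, hfp] at hk
    linarith
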